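/- Let z₁, …, z_m be (not necessarily independent) jointly defined Gaussian random variables with E[Σ_{i=1}^m z_i²] = 1. Then P[Σ_{i=1}^m z_i² ≥ 1/2] ≥ 1/12. -/

import Mathlib

open MeasureTheory ProbabilityTheory
open MeasureTheory Real Set
open scoped NNReal ENNReal

section StmtTwoAux

lemma nat_gt_neg_one (n : ℕ) : (-1:ℝ) < n := by
  have : (0:ℝ) ≤ n := Nat.cast_nonneg n
  linarith

lemma moment_Ioi (n : ℕ) {b : ℝ} (hb : 0 < b) :
    ∫ x in Ioi (0:ℝ), x ^ n * rexp (-b * x ^ 2)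
      = b ^ (-((n:ℝ)+1)/2) * (1/2) * Gamma (((n:ℝ)+1)/2) := by
  have h := integral_rpow_mul_exp_neg_mul_rpow (p := 2) (q := n)
    two_pos (nat_gt_neg_one n) hb
  simp only [Real.rpow_natCast] at h
  rw [show ((2:ℝ)) = ((2:ℕ):ℝ) by norm_num] at h
  simp only [Real.rpow_natCast] at h
  push_cast at h
  exact h

lemma moment_even (n : ℕ) {b : ℝ} (hb : 0 < b) :
    ∫ x : ℝ, x ^ (2*n) * rexp (-b * x ^ 2)
      = b ^ (-(2*(n:ℝ)+1)/2) * Gamma ((2*(n:ℝ)+1)/2) := by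
  have hcongr : (fun x : ℝ => x ^ (2*n) * rexp (-b * x ^ 2))
      = fun x : ℝ => |x| ^ (2*n) * rexp (-b * |x| ^ 2) := by
    funext x
    rw [pow_mul, pow_mul (|x|), sq_abs]
  rw [hcongr, integral_comp_abs (f := fun x : ℝ => x ^ (2*n) * rexp (-b * x ^ 2)),
    moment_Ioi _ hb]
  push_cast
  ring

lemma moment_odd (n : ℕ) (b : ℝ) :
    ∫ x : ℝ, x ^ (2*n+1) * rexp (-b * x ^ 2) = 0 := by
  set g : ℝ → ℝ := fun x => x ^ (2*n+1) * rexp (-b * x ^ 2) with hg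
  have h1 : ∫ x : ℝ, g (-x) = ∫ x : ℝ, g x :=
    (Measure.measurePreserving_neg (volume : Measure ℝ)).integral_comp
      (Homeomorph.neg ℝ).measurableEmbedding g
  have h2 : ∀ x : ℝ, g (-x) = - g x := by
    intro x
    simp only [hg]
    rw [neg_pow, Odd.neg_one_pow ⟨n, by ring⟩, neg_sq]
    ring
  simp_rw [h2, integral_neg] at h1
  linarith

lemma integrable_pow_mul_exp (n : ℕ) {b : ℝ} (hb : 0 < b) :
    Integrable (fun x : ℝ => x ^ n * rexp (-b * x ^ 2)) := by
  have h := integrable_rpow_mul_exp_neg_mul_sq hb (s := n) (nat_gt_neg_one n)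
  simpa [Real.rpow_natCast] using h



lemma pdf0_eq (v : ℝ≥0) :
    gaussianPDFReal 0 v = fun x => (√(2*π*v))⁻¹ * rexp (-(2*(v:ℝ))⁻¹ * x^2) := by
  funext x
  simp only [gaussianPDFReal, sub_zero]
  congr 2
  ring

lemma integrable_pow_pdf0 (n : ℕ) {v : ℝ≥0} (hv : 0 < (v:ℝ)) :
    Integrable (fun x : ℝ => x ^ n * gaussianPDFReal 0 v x) := by
  rw [pdf0_eq]
  have h : (fun x : ℝ => x ^ n * ((√(2*π*v))⁻¹ * rexp (-(2*(v:ℝ))⁻¹ * x^2)))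
      = fun x : ℝ => (√(2*π*v))⁻¹ * (x ^ n * rexp (-(2*(v:ℝ))⁻¹ * x^2)) := by
    funext x; ring
  rw [h]
  exact (integrable_pow_mul_exp n (by positivity)).const_mul _

lemma pdf0_moment (n : ℕ) {v : ℝ≥0} (hv : 0 < (v:ℝ)) :
    ∫ x : ℝ, x ^ n * gaussianPDFReal 0 v x
      = (√(2*π*v))⁻¹ * ∫ x : ℝ, x ^ n * rexp (-(2*(v:ℝ))⁻¹ * x^2) := by
  rw [pdf0_eq, ← integral_const_mul]
  congr 1 with x
  ring

lemma gamma_32 : Gamma ((3:ℝ)/2) = √π / 2 := by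
  rw [show (3:ℝ)/2 = 1/2 + 1 by norm_num, Gamma_add_one (by norm_num), Gamma_one_half_eq]
  ring

lemma gamma_52 : Gamma ((5:ℝ)/2) = 3 * √π / 4 := by
  rw [show (5:ℝ)/2 = 3/2 + 1 by norm_num, Gamma_add_one (by norm_num), gamma_32]
  ring

lemma pdf0_M1 {v : ℝ≥0} : ∫ x : ℝ, x * gaussianPDFReal 0 v x = 0 := by
  rw [pdf0_eq]
  have h : (fun x : ℝ => x * ((√(2*π*v))⁻¹ * rexp (-(2*(v:ℝ))⁻¹ * x^2)))
      = fun x : ℝ => (√(2*π*v))⁻¹ * (x ^ (2*0+1) * rexp (-(2*(v:ℝ))⁻¹ * x^2)) := by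
    funext x; ring
  rw [h, integral_const_mul, moment_odd, mul_zero]

lemma pdf0_M3 {v : ℝ≥0} : ∫ x : ℝ, x ^ 3 * gaussianPDFReal 0 v x = 0 := by
  rw [pdf0_eq]
  have h : (fun x : ℝ => x ^ 3 * ((√(2*π*v))⁻¹ * rexp (-(2*(v:ℝ))⁻¹ * x^2)))
      = fun x : ℝ => (√(2*π*v))⁻¹ * (x ^ (2*1+1) * rexp (-(2*(v:ℝ))⁻¹ * x^2)) := by
    funext x; ring
  rw [h, integral_const_mul, moment_odd, mul_zero]

lemma rpow_32 {t : ℝ} (ht : 0 < t) : t ^ ((3:ℝ)/2) = t * √t := by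
  rw [show (3:ℝ)/2 = 1 + 1/2 by norm_num, Real.rpow_add ht, Real.rpow_one,
    ← Real.sqrt_eq_rpow]

lemma rpow_52 {t : ℝ} (ht : 0 < t) : t ^ ((5:ℝ)/2) = t^2 * √t := by
  rw [show (5:ℝ)/2 = 2 + 1/2 by norm_num, Real.rpow_add ht,
    ← Real.sqrt_eq_rpow, show (2:ℝ) = ((2:ℕ):ℝ) by norm_num, Real.rpow_natCast]

lemma sqrt_2piv {v : ℝ≥0} : √(2*π*(v:ℝ)) = √(2*(v:ℝ)) * √π := by
  rw [show 2*π*(v:ℝ) = (2*(v:ℝ))*π by ring, Real.sqrt_mul (by positivity)]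

lemma pdf0_M2 {v : ℝ≥0} (hv : 0 < (v:ℝ)) :
    ∫ x : ℝ, x ^ 2 * gaussianPDFReal 0 v x = v := by
  have h2v : (0:ℝ) < 2*(v:ℝ) := by positivity
  rw [show (2:ℕ) = 2*1 by norm_num] at *
  rw [pdf0_moment _ hv, moment_even 1 (by positivity)]
  rw [Real.inv_rpow h2v.le, ← Real.rpow_neg h2v.le]
  push_cast
  rw [show -(-(2 * (1:ℝ) + 1) / 2) = (3:ℝ)/2 by norm_num,
    show (2 * (1:ℝ) + 1) / 2 = (3:ℝ)/2 by norm_num,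
    rpow_32 h2v, gamma_32, sqrt_2piv]
  have h1 : √(2*(v:ℝ)) ≠ 0 := by positivity
  have h2 : √π ≠ 0 := by positivity
  field_simp

lemma pdf0_M4 {v : ℝ≥0} (hv : 0 < (v:ℝ)) :
    ∫ x : ℝ, x ^ 4 * gaussianPDFReal 0 v x = 3 * (v:ℝ)^2 := by
  have h2v : (0:ℝ) < 2*(v:ℝ) := by positivity
  rw [show (4:ℕ) = 2*2 by norm_num] at *
  rw [pdf0_moment _ hv, moment_even 2 (by positivity)]
  rw [Real.inv_rpow h2v.le, ← Real.rpow_neg h2v.le]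
  push_cast
  rw [show -(-(2 * (2:ℝ) + 1) / 2) = (5:ℝ)/2 by norm_num,
    show (2 * (2:ℝ) + 1) / 2 = (5:ℝ)/2 by norm_num,
    rpow_52 h2v, gamma_52, sqrt_2piv]
  have h1 : √(2*(v:ℝ)) ≠ 0 := by positivity
  have h2 : √π ≠ 0 := by positivity
  field_simp
  ring

lemma pdf0_M0 {v : ℝ≥0} (hv : v ≠ 0) :
    ∫ x : ℝ, gaussianPDFReal 0 v x = 1 :=
  integral_gaussianPDFReal_eq_one 0 hv

lemma pdf_shift (a : ℝ) (s : ℝ≥0) (x : ℝ) :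
    gaussianPDFReal a s (x + a) = gaussianPDFReal 0 s x := by
  simp [gaussianPDFReal]

lemma pdf_sub (a : ℝ) (s : ℝ≥0) (x : ℝ) :
    gaussianPDFReal a s x = gaussianPDFReal 0 s (x - a) := by
  simp [gaussianPDFReal]

lemma nnreal_pos_of_ne {s : ℝ≥0} (hs : s ≠ 0) : 0 < (s:ℝ) := by
  exact_mod_cast pos_iff_ne_zero.mpr hs

lemma integrable_pow_gaussianReal (a : ℝ) {s : ℝ≥0} (hs : s ≠ 0) (n : ℕ) :
    Integrable (fun x : ℝ => x ^ n) (gaussianReal a s) := by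
  have hs' := nnreal_pos_of_ne hs
  rw [gaussianReal_of_var_ne_zero a hs]
  have hd : gaussianPDF a s = fun x => ((gaussianPDFReal a s x).toNNReal : ℝ≥0∞) := rfl
  rw [hd, integrable_withDensity_iff_integrable_smul
      ((measurable_gaussianPDFReal a s).real_toNNReal)]
  have he : (fun x : ℝ => ((gaussianPDFReal a s x).toNNReal : ℝ≥0) • x ^ n)
      = fun x : ℝ => (fun y : ℝ => (y + a) ^ n * gaussianPDFReal 0 s y) (x - a) := by
    funext x
    simp only [NNReal.smul_def, smul_eq_mul,
      Real.coe_toNNReal _ (gaussianPDFReal_nonneg a s x)]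
    rw [pdf_sub a s x, sub_add_cancel]
    ring
  rw [he]
  have hexp : (fun x : ℝ => (x + a)^n * gaussianPDFReal 0 s x)
      = fun x => ∑ k ∈ Finset.range (n+1),
        (a^(n-k) * (n.choose k)) * (x^k * gaussianPDFReal 0 s x) := by
    funext x
    rw [add_pow, Finset.sum_mul]
    apply Finset.sum_congr rfl
    intros
    ring
  have hint : Integrable (fun x : ℝ => (x + a)^n * gaussianPDFReal 0 s x) (volume : Measure ℝ) := by
    rw [hexp]
    exact integrable_finset_sum _ fun k _ => (integrable_pow_pdf0 k hs').const_mul _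
  exact hint.comp_sub_right a

lemma integral_pow_gaussianReal (a : ℝ) {s : ℝ≥0} (hs : s ≠ 0) (n : ℕ) :
    ∫ x, x ^ n ∂(gaussianReal a s) = ∫ x : ℝ, (x + a) ^ n * gaussianPDFReal 0 s x := by
  rw [gaussianReal_of_var_ne_zero a hs]
  have hd : gaussianPDF a s = fun x => ((gaussianPDFReal a s x).toNNReal : ℝ≥0∞) := rfl
  rw [hd, integral_withDensity_eq_integral_smul
      ((measurable_gaussianPDFReal a s).real_toNNReal)]
  have he : (fun x : ℝ => ((gaussianPDFReal a s x).toNNReal : ℝ≥0) • x ^ n)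
      = fun x : ℝ => (fun y : ℝ => (y + a) ^ n * gaussianPDFReal 0 s y) (x + -a) := by
    funext x
    simp only [NNReal.smul_def, smul_eq_mul,
      Real.coe_toNNReal _ (gaussianPDFReal_nonneg a s x)]
    rw [pdf_sub a s x]
    rw [show x + -a = x - a by ring, sub_add_cancel]
    ring
  rw [he, integral_add_right_eq_self (fun y : ℝ => (y + a) ^ n * gaussianPDFReal 0 s y) (-a)]

lemma integral_sq_gaussianReal (a : ℝ) {s : ℝ≥0} (hs : s ≠ 0) :
    ∫ x, x ^ 2 ∂(gaussianReal a s) = (s:ℝ) + a^2 := by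
  have hs' := nnreal_pos_of_ne hs
  rw [integral_pow_gaussianReal a hs 2]
  have he : (fun x : ℝ => (x + a)^2 * gaussianPDFReal 0 s x)
      = fun x => x^2 * gaussianPDFReal 0 s x + ((2*a) * (x * gaussianPDFReal 0 s x)
          + a^2 * gaussianPDFReal 0 s x) := by
    funext x; ring
  have h2 := integrable_pow_pdf0 2 (v := s) hs'
  have h1 : Integrable (fun x : ℝ => x * gaussianPDFReal 0 s x) := by
    simpa using integrable_pow_pdf0 1 (v := s) hs'
  have h0 : Integrable (fun x : ℝ => gaussianPDFReal 0 s x) := by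
    simpa using integrable_pow_pdf0 0 (v := s) hs'
  have hA : Integrable (fun x : ℝ => 2 * a * (x * gaussianPDFReal 0 s x)
      + a ^ 2 * gaussianPDFReal 0 s x) := (h1.const_mul _).add (h0.const_mul _)
  have hB : Integrable (fun x : ℝ => 2 * a * (x * gaussianPDFReal 0 s x)) := h1.const_mul _
  have hC : Integrable (fun x : ℝ => a ^ 2 * gaussianPDFReal 0 s x) := h0.const_mul _
  rw [he, integral_add h2 hA, integral_add hB hC,
    integral_const_mul, integral_const_mul, pdf0_M1, pdf0_M2 hs', pdf0_M0 hs]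
  ring

lemma integral_p4_gaussianReal (a : ℝ) {s : ℝ≥0} (hs : s ≠ 0) :
    ∫ x, x ^ 4 ∂(gaussianReal a s) = 3*(s:ℝ)^2 + 6*(s:ℝ)*a^2 + a^4 := by
  have hs' := nnreal_pos_of_ne hs
  rw [integral_pow_gaussianReal a hs 4]
  have he : (fun x : ℝ => (x + a)^4 * gaussianPDFReal 0 s x)
      = fun x => x^4 * gaussianPDFReal 0 s x + ((4*a) * (x^3 * gaussianPDFReal 0 s x)
          + ((6*a^2) * (x^2 * gaussianPDFReal 0 s x) + ((4*a^3) * (x * gaussianPDFReal 0 s x)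
          + a^4 * gaussianPDFReal 0 s x))) := by
    funext x; ring
  have h4 := integrable_pow_pdf0 4 (v := s) hs'
  have h3 := integrable_pow_pdf0 3 (v := s) hs'
  have h2 := integrable_pow_pdf0 2 (v := s) hs'
  have h1 : Integrable (fun x : ℝ => x * gaussianPDFReal 0 s x) := by
    simpa using integrable_pow_pdf0 1 (v := s) hs'
  have h0 : Integrable (fun x : ℝ => gaussianPDFReal 0 s x) := by
    simpa using integrable_pow_pdf0 0 (v := s) hs'
  have t1 : Integrable (fun x : ℝ => 4 * a * (x ^ 3 * gaussianPDFReal 0 s x)) := h3.const_mul _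
  have t2 : Integrable (fun x : ℝ => 6 * a ^ 2 * (x ^ 2 * gaussianPDFReal 0 s x)) := h2.const_mul _
  have t3 : Integrable (fun x : ℝ => 4 * a ^ 3 * (x * gaussianPDFReal 0 s x)) := h1.const_mul _
  have t4 : Integrable (fun x : ℝ => a ^ 4 * gaussianPDFReal 0 s x) := h0.const_mul _
  have s3 : Integrable (fun x : ℝ => 4 * a ^ 3 * (x * gaussianPDFReal 0 s x)
      + a ^ 4 * gaussianPDFReal 0 s x) := t3.add t4
  have s2 : Integrable (fun x : ℝ => 6 * a ^ 2 * (x ^ 2 * gaussianPDFReal 0 s x)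
      + (4 * a ^ 3 * (x * gaussianPDFReal 0 s x) + a ^ 4 * gaussianPDFReal 0 s x)) := t2.add s3
  have s1 : Integrable (fun x : ℝ => 4 * a * (x ^ 3 * gaussianPDFReal 0 s x)
      + (6 * a ^ 2 * (x ^ 2 * gaussianPDFReal 0 s x)
      + (4 * a ^ 3 * (x * gaussianPDFReal 0 s x) + a ^ 4 * gaussianPDFReal 0 s x))) := t1.add s2
  rw [he, integral_add h4 s1, integral_add t1 s2, integral_add t2 s3, integral_add t3 t4,
    integral_const_mul, integral_const_mul, integral_const_mul, integral_const_mul,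
    pdf0_M1, pdf0_M2 hs', pdf0_M3, pdf0_M4 hs', pdf0_M0 hs]
  ring

lemma gauss_facts (a : ℝ) (s : ℝ≥0) :
    Integrable (fun x : ℝ => x^2) (gaussianReal a s) ∧
    Integrable (fun x : ℝ => x^4) (gaussianReal a s) ∧
    ∫ x, x^4 ∂(gaussianReal a s) ≤ 3 * (∫ x, x^2 ∂(gaussianReal a s))^2 := by
  by_cases hs : s = 0
  · subst hs
    rw [gaussianReal_zero_var]
    have h2 : Integrable (fun x : ℝ => x^2) (Measure.dirac a) :=
      (integrable_const (a^2)).congr (ae_eq_dirac (fun x : ℝ => x^2)).symm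
    have h4 : Integrable (fun x : ℝ => x^4) (Measure.dirac a) :=
      (integrable_const (a^4)).congr (ae_eq_dirac (fun x : ℝ => x^4)).symm
    refine ⟨h2, h4, ?_⟩
    rw [integral_dirac, integral_dirac]
    nlinarith [sq_nonneg a, sq_nonneg (a^2)]
  · refine ⟨integrable_pow_gaussianReal a hs 2, integrable_pow_gaussianReal a hs 4, ?_⟩
    rw [integral_sq_gaussianReal a hs, integral_p4_gaussianReal a hs]
    nlinarith [sq_nonneg a, sq_nonneg (a^2), (nnreal_pos_of_ne hs).le]

lemma paley_zygmund_aux {Ω : Type*} [MeasurableSpace Ω] (μ : Measure Ω) [IsProbabilityMeasure μ]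
    (S : Ω → ℝ) (hSm : Measurable S) (hSnn : ∀ ω, 0 ≤ S ω) (hS_int : Integrable S μ)
    (hS_sq_int : Integrable (fun ω => S ω ^ 2) μ)
    (hS1 : ∫ ω, S ω ∂μ = 1) (hS2 : ∫ ω, S ω ^ 2 ∂μ ≤ 3) :
    (1:ℝ≥0∞)/12 ≤ μ {ω | 1/2 ≤ S ω} := by
  set A : Set Ω := {ω | 1/2 ≤ S ω} with hA_def
  have hA : MeasurableSet A := measurableSet_le measurable_const hSm
  -- Step 1 : ∫_A S ≥ 1/2
  have hcompl : ∫ ω in Aᶜ, S ω ∂μ ≤ 1/2 := by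
    have h1 : ∫ ω in Aᶜ, S ω ∂μ ≤ ∫ _ in Aᶜ, (1/2:ℝ) ∂μ := by
      refine setIntegral_mono_on hS_int.integrableOn (integrableOn_const ?_) hA.compl ?_
      · exact measure_ne_top μ _
      · intro x hx
        exact le_of_not_ge hx
    have h2 : ∫ _ in Aᶜ, (1/2:ℝ) ∂μ = (μ Aᶜ).toReal * (1/2) := by
      rw [setIntegral_const, smul_eq_mul]
      rfl
    have h3 : (μ Aᶜ).toReal ≤ 1 := by
      have := measure_mono (subset_univ Aᶜ) (μ := μ)
      rw [measure_univ] at this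
      exact ENNReal.toReal_le_of_le_ofReal one_pos.le (by simpa using this)
    rw [h2] at h1
    nlinarith [ENNReal.toReal_nonneg (a := μ Aᶜ)]
  have hsetA : 1/2 ≤ ∫ ω in A, S ω ∂μ := by
    have := integral_add_compl hA hS_int
    rw [hS1] at this
    linarith
  -- Step 2 : Cauchy-Schwarz
  set g : Ω → ℝ := A.indicator (fun _ => (1:ℝ)) with hg_def
  have hg_nonneg : ∀ ω, 0 ≤ g ω := fun ω => Set.indicator_nonneg (fun _ _ => zero_le_one) ω
  have hSg : (fun ω => S ω * g ω) = A.indicator S := by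
    funext ω
    by_cases h : ω ∈ A <;> simp [hg_def, Set.indicator_apply, h]
  have hmemS : MemLp S (ENNReal.ofReal 2) μ := by
    rw [show ENNReal.ofReal 2 = 2 by norm_num]
    exact (memLp_two_iff_integrable_sq hSm.aestronglyMeasurable).mpr hS_sq_int
  have hmemg : MemLp g (ENNReal.ofReal 2) μ := by
    rw [show ENNReal.ofReal 2 = 2 by norm_num]
    exact memLp_indicator_const 2 hA 1 (Or.inr (measure_ne_top μ A))
  have hCS := integral_mul_le_Lp_mul_Lq_of_nonneg
    (Real.HolderTriple.mk (p := 2) (q := 2) (by norm_num) (by norm_num) (by norm_num))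
    (Filter.Eventually.of_forall hSnn) (Filter.Eventually.of_forall hg_nonneg) hmemS hmemg
  rw [hSg, integral_indicator hA] at hCS
  have hg2 : ∀ ω, g ω ^ (2:ℝ) = g ω := by
    intro ω
    by_cases h : ω ∈ A
    · simp [hg_def, Set.indicator_apply, h]
    · simp [hg_def, Set.indicator_apply, h, Real.zero_rpow (by norm_num : (2:ℝ) ≠ 0)]
  have hgint : ∫ ω, g ω ^ (2:ℝ) ∂μ = (μ A).toReal := by
    simp_rw [hg2]
    rw [hg_def, integral_indicator hA, setIntegral_const, smul_eq_mul, mul_one]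
    rfl
  have hSrpow : ∀ ω, S ω ^ (2:ℝ) = S ω ^ 2 := by
    intro ω
    rw [show (2:ℝ) = ((2:ℕ):ℝ) by norm_num, Real.rpow_natCast]
  simp_rw [hSrpow] at hCS
  rw [hgint] at hCS
  set t : ℝ := (μ A).toReal with ht_def
  have htnn : 0 ≤ t := ENNReal.toReal_nonneg
  have hInn : 0 ≤ ∫ ω, S ω ^ 2 ∂μ := integral_nonneg (fun ω => sq_nonneg _)
  -- 1/2 ≤ (∫ S²)^(1/2) * t^(1/2)
  have hhalf : (1/2:ℝ) ≤ (∫ ω, S ω ^ 2 ∂μ) ^ ((1:ℝ)/2) * t ^ ((1:ℝ)/2) :=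
    le_trans hsetA hCS
  have hsq : (1/4:ℝ) ≤ (∫ ω, S ω ^ 2 ∂μ) * t := by
    have h1 : ((1/2:ℝ))^2 ≤ ((∫ ω, S ω ^ 2 ∂μ) ^ ((1:ℝ)/2) * t ^ ((1:ℝ)/2))^2 := by
      apply pow_le_pow_left₀ (by norm_num) hhalf
    have h2 : ((∫ ω, S ω ^ 2 ∂μ) ^ ((1:ℝ)/2) * t ^ ((1:ℝ)/2))^2
        = (∫ ω, S ω ^ 2 ∂μ) * t := by
      rw [mul_pow, ← Real.rpow_natCast ((∫ ω, S ω ^ 2 ∂μ) ^ ((1:ℝ)/2)) 2,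
        ← Real.rpow_natCast (t ^ ((1:ℝ)/2)) 2,
        ← Real.rpow_mul hInn, ← Real.rpow_mul htnn]
      norm_num
    rw [h2] at h1
    calc (1/4:ℝ) = (1/2)^2 := by norm_num
    _ ≤ _ := h1
  have ht : (1/12:ℝ) ≤ t := by nlinarith
  have : ENNReal.ofReal (1/12) ≤ ENNReal.ofReal t := ENNReal.ofReal_le_ofReal ht
  rw [ht_def, ENNReal.ofReal_toReal (measure_ne_top μ A)] at this
  refine le_trans (le_of_eq ?_) this
  rw [ENNReal.ofReal_div_of_pos (by norm_num)]
  norm_num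

end StmtTwoAux

/-- If `z₁, …, z_m` are (not necessarily independent) Gaussian random variables with
`E[Σᵢ zᵢ²] = 1`, then `P[Σᵢ zᵢ² ≥ 1/2] ≥ 1/12`. -/
theorem stmt_2 {Ω : Type*} [MeasurableSpace Ω] (μ : Measure Ω) [IsProbabilityMeasure μ]
    (m : ℕ) (z : Fin m → Ω → ℝ)
    (hmeas : ∀ i, Measurable (z i))
    (hgauss : ∀ i, ∃ (a : ℝ) (s : NNReal), μ.map (z i) = gaussianReal a s)
    (hexp : ∫ ω, ∑ i, z i ω ^ 2 ∂μ = 1) :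
    (1 : ENNReal) / 12 ≤ μ {ω | 1 / 2 ≤ ∑ i, z i ω ^ 2} := by
  classical
  -- per-coordinate facts
  have hint2 : ∀ i, Integrable (fun ω => z i ω ^ 2) μ := by
    intro i
    obtain ⟨a, s, h⟩ := hgauss i
    have h2 := (gauss_facts a s).1
    rw [← h] at h2
    exact (integrable_map_measure (by
      rw [h]
      exact (measurable_id.pow_const 2).aestronglyMeasurable) (hmeas i).aemeasurable).mp h2
  have hint4 : ∀ i, Integrable (fun ω => z i ω ^ 4) μ := by
    intro i
    obtain ⟨a, s, h⟩ := hgauss i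
    have h2 := (gauss_facts a s).2.1
    rw [← h] at h2
    exact (integrable_map_measure (by
      rw [h]
      exact (measurable_id.pow_const 4).aestronglyMeasurable) (hmeas i).aemeasurable).mp h2
  have hmom : ∀ i, ∫ ω, z i ω ^ 4 ∂μ ≤ 3 * (∫ ω, z i ω ^ 2 ∂μ)^2 := by
    intro i
    obtain ⟨a, s, h⟩ := hgauss i
    have h2 := (gauss_facts a s).2.2
    rw [← h, integral_map (hmeas i).aemeasurable (by
        rw [h]; exact (measurable_id.pow_const 4).aestronglyMeasurable),
      integral_map (hmeas i).aemeasurable (by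
        rw [h]; exact (measurable_id.pow_const 2).aestronglyMeasurable)] at h2
    exact h2
  have he0 : ∀ i, (0:ℝ) ≤ ∫ ω, z i ω ^ 2 ∂μ := fun i => integral_nonneg fun ω => sq_nonneg _
  have hesum : ∑ i, ∫ ω, z i ω ^ 2 ∂μ = 1 := by
    rw [← integral_finset_sum _ fun i _ => hint2 i]
    exact hexp
  -- products are integrable
  have hintprod : ∀ i j, Integrable (fun ω => z i ω ^ 2 * z j ω ^ 2) μ := by
    intro i j
    have hg : Integrable (fun ω => 1/2 * (z i ω ^ 4 + z j ω ^ 4)) μ :=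
      ((hint4 i).add (hint4 j)).const_mul (1/2)
    refine Integrable.mono' hg
      (((hmeas i).pow_const 2).mul ((hmeas j).pow_const 2)).aestronglyMeasurable
      (Filter.Eventually.of_forall fun ω => ?_)
    rw [Real.norm_of_nonneg (by positivity)]
    nlinarith [sq_nonneg (z i ω ^ 2 - z j ω ^ 2), sq_nonneg (z i ω), sq_nonneg (z j ω)]
  -- S and its properties
  have hSm : Measurable (fun ω => ∑ i, z i ω ^ 2) :=
    Finset.measurable_sum _ fun i _ => (hmeas i).pow_const 2
  have hS_int : Integrable (fun ω => ∑ i, z i ω ^ 2) μ :=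
    integrable_finset_sum _ fun i _ => hint2 i
  have hsq_eq : (fun ω => (∑ i, z i ω ^ 2) ^ 2)
      = fun ω => ∑ i, ∑ j, z i ω ^ 2 * z j ω ^ 2 := by
    funext ω
    rw [sq, Finset.sum_mul_sum]
  have hS_sq_int : Integrable (fun ω => (∑ i, z i ω ^ 2) ^ 2) μ := by
    rw [hsq_eq]
    exact integrable_finset_sum _ fun i _ =>
      integrable_finset_sum _ fun j _ => hintprod i j
  have hS2 : ∫ ω, (∑ i, z i ω ^ 2) ^ 2 ∂μ ≤ 3 := by
    rw [hsq_eq, integral_finset_sum _ fun i _ =>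
      integrable_finset_sum _ fun j _ => hintprod i j]
    have hin : ∀ i : Fin m, ∫ ω, ∑ j, z i ω ^ 2 * z j ω ^ 2 ∂μ
        = ∑ j, ∫ ω, z i ω ^ 2 * z j ω ^ 2 ∂μ :=
      fun i => integral_finset_sum _ fun j _ => hintprod i j
    rw [Finset.sum_congr rfl fun i _ => hin i]
    have hstep : ∀ i j : Fin m, ∫ ω, z i ω ^ 2 * z j ω ^ 2 ∂μ
        ≤ 3 * (∫ ω, z i ω ^ 2 ∂μ) * (∫ ω, z j ω ^ 2 ∂μ) := by
      intro i j
      have hmem : ∀ k : Fin m, MemLp (fun ω => z k ω ^ 2) (ENNReal.ofReal 2) μ := by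
        intro k
        rw [show ENNReal.ofReal 2 = 2 by norm_num]
        refine (memLp_two_iff_integrable_sq
          ((hmeas k).pow_const 2).aestronglyMeasurable).mpr ?_
        have : (fun ω => (z k ω ^ 2) ^ 2) = fun ω => z k ω ^ 4 := by
          funext ω; ring
        rw [this]
        exact hint4 k
      have hCS := integral_mul_le_Lp_mul_Lq_of_nonneg
        (Real.HolderTriple.mk (p := 2) (q := 2) (by norm_num) (by norm_num) (by norm_num))
        (Filter.Eventually.of_forall fun ω => sq_nonneg (z i ω))
        (Filter.Eventually.of_forall fun ω => sq_nonneg (z j ω)) (hmem i) (hmem j)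
      have hrw : ∀ k : Fin m, (fun ω => (z k ω ^ 2) ^ (2:ℝ)) = fun ω => z k ω ^ 4 := by
        intro k
        funext ω
        rw [show (2:ℝ) = ((2:ℕ):ℝ) by norm_num, Real.rpow_natCast]
        ring
      simp_rw [hrw] at hCS
      have hbd : ∀ k : Fin m, (∫ ω, z k ω ^ 4 ∂μ) ^ ((1:ℝ)/2)
          ≤ √3 * ∫ ω, z k ω ^ 2 ∂μ := by
        intro k
        have h1 : (∫ ω, z k ω ^ 4 ∂μ) ^ ((1:ℝ)/2)
            ≤ (3 * (∫ ω, z k ω ^ 2 ∂μ)^2) ^ ((1:ℝ)/2) :=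
          Real.rpow_le_rpow (integral_nonneg fun ω => by positivity) (hmom k) (by norm_num)
        rw [← Real.sqrt_eq_rpow] at h1
        rw [← Real.sqrt_eq_rpow] at h1
        rw [Real.sqrt_mul (by norm_num), Real.sqrt_sq (he0 k)] at h1
        rw [← Real.sqrt_eq_rpow]
        exact h1
      calc ∫ ω, z i ω ^ 2 * z j ω ^ 2 ∂μ
          ≤ (∫ ω, z i ω ^ 4 ∂μ) ^ ((1:ℝ)/2) * (∫ ω, z j ω ^ 4 ∂μ) ^ ((1:ℝ)/2) := hCS
        _ ≤ (√3 * ∫ ω, z i ω ^ 2 ∂μ) * (√3 * ∫ ω, z j ω ^ 2 ∂μ) := by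
            apply mul_le_mul (hbd i) (hbd j) (Real.rpow_nonneg
              (integral_nonneg fun ω => by positivity) _) (by positivity)
        _ = (√3 * √3) * ((∫ ω, z i ω ^ 2 ∂μ) * (∫ ω, z j ω ^ 2 ∂μ)) := by ring
        _ = 3 * (∫ ω, z i ω ^ 2 ∂μ) * (∫ ω, z j ω ^ 2 ∂μ) := by
            rw [Real.mul_self_sqrt (by norm_num)]; ring
    calc ∑ i, ∑ j, ∫ ω, z i ω ^ 2 * z j ω ^ 2 ∂μ
        ≤ ∑ i, ∑ j, 3 * (∫ ω, z i ω ^ 2 ∂μ) * (∫ ω, z j ω ^ 2 ∂μ) :=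
          Finset.sum_le_sum fun i _ => Finset.sum_le_sum fun j _ => hstep i j
      _ = 3 * ((∑ i, ∫ ω, z i ω ^ 2 ∂μ) * (∑ j, ∫ ω, z j ω ^ 2 ∂μ)) := by
          rw [Finset.sum_mul_sum, Finset.mul_sum]
          refine Finset.sum_congr rfl fun i _ => ?_
          rw [Finset.mul_sum]
          refine Finset.sum_congr rfl fun j _ => ?_
          ring
      _ = 3 := by rw [hesum]; norm_num
  exact paley_zygmund_aux μ (fun ω => ∑ i, z i ω ^ 2) hSm
    (fun ω => Finset.sum_nonneg fun i _ => sq_nonneg _) hS_int hS_sq_int hexp hS2
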